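/- Let A and B be lattices, let f : A → B be a lattice homomorphism, and let π₀, π₁ : B → A be lattice homomorphisms such that π₀ ∘ f = π₁ ∘ f = id_A. Assume that the congruences of B are exactly the four pairwise distinct elements ⊥, ker π₀, ker π₁, ⊤ and that ker π₀ ∩ ker π₁ = ⊥ (so Con B is isomorphic to the four-element Boolean lattice 2² whose coatoms — equivalently atoms — are ker π₀ and ker π₁). Then there exist u < v in A and an element z ∈ B with f(u) < z < f(v) such that {Θ_B(f(u), z), Θ_B(z, f(v))} = {ker π₀, ker π₁}; in particular f(u) < z < f(v) is a congruence chain of B. -/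

import Mathlib

set_option linter.unusedVariables false

universe u v

/-- A congruence of a lattice: an equivalence relation compatible with `⊔` and `⊓`. -/
structure LatCon (L : Type u) [Lattice L] extends Setoid L where
  sup_comp : ∀ {a b c d : L}, r a b → r c d → r (a ⊔ c) (b ⊔ d)
  inf_comp : ∀ {a b c d : L}, r a b → r c d → r (a ⊓ c) (b ⊓ d)

namespace LatCon

variable {L : Type u} [Lattice L]

theorem ext' {θ ψ : LatCon L} (h : θ.r = ψ.r) : θ = ψ := by
  obtain ⟨⟨r₁, h₁⟩, _, _⟩ := θ
  obtain ⟨⟨r₂, h₂⟩, _, _⟩ := ψ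
  cases h
  rfl

instance : PartialOrder (LatCon L) where
  le θ ψ := ∀ ⦃a b : L⦄, θ.r a b → ψ.r a b
  le_refl θ a b h := h
  le_trans θ₁ θ₂ θ₃ h₁ h₂ a b h := h₂ (h₁ h)
  le_antisymm θ ψ h₁ h₂ :=
    ext' (funext fun a => funext fun b => propext ⟨fun h => h₁ h, fun h => h₂ h⟩)

instance : InfSet (LatCon L) where
  sInf S :=
    { r := fun a b => ∀ θ ∈ S, θ.r a b
      iseqv := ⟨fun a θ _ => θ.iseqv.refl a,
        fun h θ hθ => θ.iseqv.symm (h θ hθ),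
        fun h₁ h₂ θ hθ => θ.iseqv.trans (h₁ θ hθ) (h₂ θ hθ)⟩
      sup_comp := fun h₁ h₂ θ hθ => θ.sup_comp (h₁ θ hθ) (h₂ θ hθ)
      inf_comp := fun h₁ h₂ θ hθ => θ.inf_comp (h₁ θ hθ) (h₂ θ hθ) }

instance : CompleteLattice (LatCon L) :=
  completeLatticeOfInf _ fun S =>
    ⟨fun θ hθ a b h => h θ hθ, fun ψ hψ a b h θ hθ => hψ hθ h⟩

end LatCon

/-- The principal congruence `Θ_L(x, y)` generated by a pair of elements. -/
def latConPrincipal {L : Type u} [Lattice L] (x y : L) : LatCon L :=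
  sInf {θ : LatCon L | θ.r x y}

/-- Compact element of a complete lattice, with the meaning `CompleteLattice.IsCompactElement`
had in Mathlib of December 2024. -/
def CompleteLattice.IsCompactElement {α : Type*} [CompleteLattice α] (k : α) : Prop :=
  ∀ s : Set α, k ≤ sSup s → ∃ t : Finset α, ↑t ⊆ s ∧ k ≤ t.sup id

/-- The (∨,0)-semilattice of compact (i.e., finitely generated) congruences of a lattice. -/
abbrev ConC (L : Type u) [Lattice L] : Type u :=
  {θ : LatCon L // CompleteLattice.IsCompactElement θ}

/-- The congruence of `B` generated by the image of a congruence under a lattice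
homomorphism `f : A → B`; `Con_c f` is the restriction of this map to compact congruences. -/
def conMap {A : Type u} {B : Type v} [Lattice A] [Lattice B] (f : LatticeHom A B)
    (θ : LatCon A) : LatCon B :=
  sInf {ψ : LatCon B | ∀ a b : A, θ.r a b → ψ.r (f a) (f b)}

/-- The kernel congruence of a lattice homomorphism. -/
def latKer {A : Type u} {B : Type v} [Lattice A] [Lattice B] (f : LatticeHom A B) :
    LatCon A where
  r a b := f a = f b
  iseqv := ⟨fun _ => rfl, Eq.symm, Eq.trans⟩
  sup_comp := fun h₁ h₂ => by simp only [map_sup]; rw [h₁, h₂]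
  inf_comp := fun h₁ h₂ => by simp only [map_inf]; rw [h₁, h₂]

/-- A lattice is simple if it has exactly two congruences. -/
def SimpleLat (L : Type u) [Lattice L] : Prop :=
  ∃ θ ψ : LatCon L, θ ≠ ψ ∧ ∀ χ : LatCon L, χ = θ ∨ χ = ψ

/-- A bundled lattice. -/
structure BLat : Type (u + 1) where
  carrier : Type u
  [str : Lattice carrier]

attribute [instance] BLat.str

instance : CoeSort BLat.{u} (Type u) := ⟨BLat.carrier⟩

/-- The order-dual of a bundled lattice. -/
def BLat.dual (X : BLat.{u}) : BLat.{u} := ⟨(↥X)ᵒᵈ⟩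

/-- A bundled bounded lattice. -/
structure BdLat : Type (u + 1) where
  carrier : Type u
  [str : Lattice carrier]
  [bdd : BoundedOrder carrier]

attribute [instance] BdLat.str BdLat.bdd

instance : CoeSort BdLat.{u} (Type u) := ⟨BdLat.carrier⟩

/-- The underlying (bundled) lattice of a bounded lattice. -/
def BdLat.toBLat (X : BdLat.{u}) : BLat.{u} := ⟨X.carrier⟩

/-- A class of lattices is a variety if it is closed under homomorphic images,
sublattices and arbitrary direct products. -/
def IsLatVariety (V : BLat.{u} → Prop) : Prop :=
  (∀ (X Y : BLat.{u}) (f : LatticeHom X Y), Function.Surjective f → V X → V Y) ∧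
  (∀ (X Y : BLat.{u}) (f : LatticeHom X Y), Function.Injective f → V Y → V X) ∧
  (∀ (ι : Type u) (F : ι → BLat.{u}), (∀ i, V (F i)) → V ⟨∀ i, F i⟩)

/-- A class of bounded lattices is a variety if it is closed under homomorphic images
(under 0,1-lattice homomorphisms), bounded sublattices and arbitrary direct products. -/
def IsBddLatVariety (V : BdLat.{u} → Prop) : Prop :=
  (∀ (X Y : BdLat.{u}) (f : BoundedLatticeHom X Y), Function.Surjective f → V X → V Y) ∧
  (∀ (X Y : BdLat.{u}) (f : BoundedLatticeHom X Y), Function.Injective f → V Y → V X) ∧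
  (∀ (ι : Type u) (F : ι → BdLat.{u}), (∀ i, V (F i)) → V ⟨∀ i, F i⟩)

/-- `VarMem K X` states that `X` belongs to the variety `Var K` generated by `K`,
i.e. to every variety containing `K`. -/
def VarMem (K X : BLat.{u}) : Prop :=
  ∀ V : BLat.{u} → Prop, IsLatVariety V → V K → V X

/-- `Con_c A` and `Con_c B` are isomorphic (∨,0)-semilattices; since finite joins and `0` are
determined by the order, this is equivalent to the existence of an order isomorphism. -/
def ConcIso (A : BLat.{u}) (B : BLat.{v}) : Prop :=
  Nonempty (ConC ↥A ≃o ConC ↥B)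

section Aux

variable {L : Type u} [Lattice L]

/-- The equality congruence. -/
def eqCon (L : Type u) [Lattice L] : LatCon L where
  r a b := a = b
  iseqv := ⟨fun _ => rfl, Eq.symm, Eq.trans⟩
  sup_comp := fun h₁ h₂ => by rw [h₁, h₂]
  inf_comp := fun h₁ h₂ => by rw [h₁, h₂]

lemma latCon_bot_r_iff {a b : L} : (⊥ : LatCon L).r a b ↔ a = b :=
  ⟨fun h => (bot_le : (⊥ : LatCon L) ≤ eqCon L) h,
   fun h => h ▸ (⊥ : LatCon L).iseqv.refl a⟩

lemma latConPrincipal_r (x y : L) : (latConPrincipal x y).r x y := fun _ h => h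

lemma latConPrincipal_le {x y : L} {θ : LatCon L} (h : θ.r x y) :
    latConPrincipal x y ≤ θ := sInf_le h

lemma latConPrincipal_ne_bot {x y : L} (h : x ≠ y) : latConPrincipal x y ≠ ⊥ :=
  fun he => h (latCon_bot_r_iff.mp (he ▸ latConPrincipal_r x y))

lemma eq_of_le_coatom {θ κ κ' : LatCon L}
    (hall : ∀ χ : LatCon L, χ = ⊥ ∨ χ = κ ∨ χ = κ' ∨ χ = ⊤)
    (hmeet : κ ⊓ κ' = ⊥) (hbot' : (⊥ : LatCon L) ≠ κ') (htop : κ ≠ ⊤)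
    (hle : θ ≤ κ) (hne : θ ≠ ⊥) : θ = κ := by
  rcases hall θ with h | h | h | h
  · exact absurd h hne
  · exact h
  · exact absurd ((inf_eq_right.mpr (h ▸ hle)).symm.trans hmeet).symm hbot'
  · exact absurd (top_le_iff.mp (h ▸ hle)) htop

lemma latKer_inj {A : Type u} {B : Type v} [Lattice A] [Lattice B]
    (π₀ π₁ : LatticeHom B A) (hmeet : latKer π₀ ⊓ latKer π₁ = ⊥) {x y : B}
    (h0 : π₀ x = π₀ y) (h1 : π₁ x = π₁ y) : x = y := by
  let χ : LatCon B :=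
    { r := fun a b => π₀ a = π₀ b ∧ π₁ a = π₁ b
      iseqv := ⟨fun _ => ⟨rfl, rfl⟩, fun h => ⟨h.1.symm, h.2.symm⟩,
        fun h h' => ⟨h.1.trans h'.1, h.2.trans h'.2⟩⟩
      sup_comp := fun h₁ h₂ => by
        simp only [map_sup]
        exact ⟨by rw [h₁.1, h₂.1], by rw [h₁.2, h₂.2]⟩
      inf_comp := fun h₁ h₂ => by
        simp only [map_inf]
        exact ⟨by rw [h₁.1, h₂.1], by rw [h₁.2, h₂.2]⟩ }
  have hχ : χ ≤ latKer π₀ ⊓ latKer π₁ :=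
    le_inf (fun a b h => h.1) (fun a b h => h.2)
  have := hmeet ▸ hχ
  exact latCon_bot_r_iff.mp (this ⟨h0, h1⟩)

/-- The key construction: from an element `z` with `π₀ z < π₁ z` build a congruence chain. -/
lemma chain_aux {A : Type u} {B : Type v} [Lattice A] [Lattice B]
    (f : LatticeHom A B) (π₀ π₁ : LatticeHom B A)
    (hπ₀ : ∀ a, π₀ (f a) = a) (hπ₁ : ∀ a, π₁ (f a) = a)
    (hbot₀ : (⊥ : LatCon B) ≠ latKer π₀) (hbot₁ : (⊥ : LatCon B) ≠ latKer π₁)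
    (htop₀ : latKer π₀ ≠ ⊤) (htop₁ : latKer π₁ ≠ ⊤)
    (hall : ∀ θ : LatCon B, θ = ⊥ ∨ θ = latKer π₀ ∨ θ = latKer π₁ ∨ θ = ⊤)
    (hmeet : latKer π₀ ⊓ latKer π₁ = ⊥)
    (z : B) (hz : π₀ z < π₁ z) :
    ∃ u v : A, u < v ∧ ∃ z : B, f u < z ∧ z < f v ∧
      ({latConPrincipal (f u) z, latConPrincipal z (f v)} : Set (LatCon B)) =
        {latKer π₀, latKer π₁} := by
  have hne₁ : f (π₀ z) ≠ z := fun h => hz.ne (by simpa [hπ₁] using congrArg π₁ h)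
  have hne₂ : z ≠ f (π₁ z) := fun h => hz.ne (by simpa [hπ₀] using congrArg π₀ h)
  refine ⟨π₀ z, π₁ z, hz, z, ?_, ?_, ?_⟩
  · have heq : f (π₀ z) ⊓ z = f (π₀ z) := by
      refine latKer_inj π₀ π₁ hmeet ?_ ?_
      · simp [map_inf, hπ₀]
      · simp only [map_inf, hπ₁]
        exact inf_eq_left.mpr hz.le
    exact lt_of_le_of_ne (heq.symm.trans_le inf_le_right) hne₁
  · have heq : z ⊔ f (π₁ z) = f (π₁ z) := by
      refine latKer_inj π₀ π₁ hmeet ?_ ?_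
      · simp only [map_sup, hπ₀]
        exact sup_eq_right.mpr hz.le
      · simp [map_sup, hπ₁]
    exact lt_of_le_of_ne (le_sup_left.trans heq.le) hne₂
  · have h1 : latConPrincipal (f (π₀ z)) z = latKer π₀ := by
      refine eq_of_le_coatom hall hmeet hbot₁ htop₀
        (latConPrincipal_le ?_) (latConPrincipal_ne_bot hne₁)
      show π₀ (f (π₀ z)) = π₀ z
      rw [hπ₀]
    have h2 : latConPrincipal z (f (π₁ z)) = latKer π₁ := by
      refine eq_of_le_coatom (κ := latKer π₁) (κ' := latKer π₀)
        (fun χ => by rcases hall χ with h | h | h | h <;> tauto)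
        (by rw [inf_comm]; exact hmeet) hbot₀ htop₁
        (latConPrincipal_le ?_) (latConPrincipal_ne_bot hne₂)
      show π₁ z = π₁ (f (π₁ z))
      rw [hπ₁]
    rw [h1, h2]

end Aux

/-- Let `f : A → B`, `π₀, π₁ : B → A` be lattice homomorphisms with `π₀ ∘ f = π₁ ∘ f = id`,
such that `B` has exactly the four distinct congruences `⊥`, `ker π₀`, `ker π₁`, `⊤`, with
`ker π₀ ⊓ ker π₁ = ⊥` (so `Con B ≅ 2²` with coatoms `ker π₀` and `ker π₁`). Then there are
`u < v` in `A` and `z ∈ B` with `f u < z < f v` such that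
`{Θ_B(f u, z), Θ_B(z, f v)} = {ker π₀, ker π₁}`; that is, `f u < z < f v` is a congruence
chain of `B`. -/
theorem exists_congruence_chain
    (A : Type u) (B : Type v) [Lattice A] [Lattice B]
    (f : LatticeHom A B) (π₀ π₁ : LatticeHom B A)
    (hπ₀ : ∀ a, π₀ (f a) = a) (hπ₁ : ∀ a, π₁ (f a) = a)
    (hbot₀ : (⊥ : LatCon B) ≠ latKer π₀) (hbot₁ : (⊥ : LatCon B) ≠ latKer π₁)
    (hbottop : (⊥ : LatCon B) ≠ ⊤)
    (h₀₁ : latKer π₀ ≠ latKer π₁)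
    (htop₀ : latKer π₀ ≠ ⊤) (htop₁ : latKer π₁ ≠ ⊤)
    (hall : ∀ θ : LatCon B, θ = ⊥ ∨ θ = latKer π₀ ∨ θ = latKer π₁ ∨ θ = ⊤)
    (hmeet : latKer π₀ ⊓ latKer π₁ = ⊥) :
    ∃ u v : A, u < v ∧ ∃ z : B, f u < z ∧ z < f v ∧
      ({latConPrincipal (f u) z, latConPrincipal z (f v)} : Set (LatCon B)) =
        {latKer π₀, latKer π₁} := by
  classical
  -- There is an element not fixed by f ∘ π₀.
  have hexb : ∃ b : B, b ≠ f (π₀ b) := by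
    by_contra hc
    push_neg at hc
    apply hbot₀
    refine le_antisymm bot_le ?_
    intro x y h
    refine latCon_bot_r_iff.mpr ?_
    have h' : π₀ x = π₀ y := h
    calc x = f (π₀ x) := hc x
      _ = f (π₀ y) := by rw [h']
      _ = y := (hc y).symm
  obtain ⟨b₀, hb₀⟩ := hexb
  have hπ₀p : π₀ (b₀ ⊓ f (π₀ b₀)) = π₀ b₀ := by simp [map_inf, hπ₀]
  have hπ₀q : π₀ (b₀ ⊔ f (π₀ b₀)) = π₀ b₀ := by simp [map_sup, hπ₀]
  have hpq : b₀ ⊓ f (π₀ b₀) ≠ b₀ ⊔ f (π₀ b₀) := by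
    intro h
    apply hb₀
    have h1 : b₀ ≤ f (π₀ b₀) := le_sup_left.trans (h.symm.trans_le inf_le_right)
    have h2 : f (π₀ b₀) ≤ b₀ := le_sup_right.trans (h.symm.trans_le inf_le_left)
    exact le_antisymm h1 h2
  have hpq' : b₀ ⊓ f (π₀ b₀) ≤ b₀ ⊔ f (π₀ b₀) := inf_le_left.trans le_sup_left
  have hπ₁pq : π₁ (b₀ ⊓ f (π₀ b₀)) ≤ π₁ (b₀ ⊔ f (π₀ b₀)) := OrderHomClass.mono π₁ hpq'
  have hπ₁ne : π₁ (b₀ ⊓ f (π₀ b₀)) ≠ π₁ (b₀ ⊔ f (π₀ b₀)) := by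
    intro h
    exact hpq (latKer_inj π₀ π₁ hmeet (hπ₀p.trans hπ₀q.symm) h)
  by_cases hcase : π₀ b₀ ⊔ π₁ (b₀ ⊓ f (π₀ b₀)) = π₁ (b₀ ⊓ f (π₀ b₀))
  · -- π₀ b₀ ≤ π₁ p; use z := q ⊓ f (π₁ q), with coordinates (π₀ b₀ ⊓ π₁ q, π₁ q)
    have hale : π₀ b₀ ≤ π₁ (b₀ ⊓ f (π₀ b₀)) := sup_eq_right.mp hcase
    set q := b₀ ⊔ f (π₀ b₀) with hqdef
    have hz0 : π₀ (q ⊓ f (π₁ q)) = π₀ b₀ ⊓ π₁ q := by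
      rw [map_inf, hπ₀q, hπ₀]
    have hz1 : π₁ (q ⊓ f (π₁ q)) = π₁ q := by
      rw [map_inf, hπ₁, inf_idem]
    have hzlt : π₀ (q ⊓ f (π₁ q)) < π₁ (q ⊓ f (π₁ q)) := by
      rw [hz0, hz1]
      refine lt_of_le_of_ne inf_le_right fun h => ?_
      have hq' : π₁ q ≤ π₀ b₀ := inf_eq_right.mp h
      exact hπ₁ne (le_antisymm hπ₁pq (hq'.trans hale))
    exact chain_aux f π₀ π₁ hπ₀ hπ₁ hbot₀ hbot₁ htop₀ htop₁ hall hmeet _ hzlt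
  · -- π₁ p < π₀ b₀ ⊔ π₁ p; use z := p ⊔ f (π₁ p), coordinates (π₀ b₀ ⊔ π₁ p, π₁ p)
    set p := b₀ ⊓ f (π₀ b₀) with hpdef
    have hz0 : π₀ (p ⊔ f (π₁ p)) = π₀ b₀ ⊔ π₁ p := by
      rw [map_sup, hπ₀p, hπ₀]
    have hz1 : π₁ (p ⊔ f (π₁ p)) = π₁ p := by
      rw [map_sup, hπ₁, sup_idem]
    have hzlt : π₁ (p ⊔ f (π₁ p)) < π₀ (p ⊔ f (π₁ p)) := by
      rw [hz0, hz1]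
      exact lt_of_le_of_ne le_sup_right fun h => hcase h.symm
    have := chain_aux f π₁ π₀ hπ₁ hπ₀ hbot₁ hbot₀ htop₁ htop₀
      (fun χ => by rcases hall χ with h | h | h | h <;> tauto)
      (by rw [inf_comm]; exact hmeet) _ hzlt
    obtain ⟨u, v, huv, w, h1, h2, h3⟩ := this
    exact ⟨u, v, huv, w, h1, h2, h3.trans (Set.pair_comm _ _)⟩
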